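/- arXiv:2510.04993 — 2 statements merged into one kernel-verified Lean document; each statement's English description precedes it below -/
import Mathlib

section
/- Consider states consisting of a list of n pairs (A₁,b₁), …, (Aₙ,bₙ), where each Aᵢ is an n×n strictly lower triangular matrix over 𝔽₂ and each bᵢ ∈ 𝔽₂ⁿ. Allow two operations: a swap, exchanging the pairs at two indices i and j; and a compose at distinct indices i and j, replacing Aᵢ by Aᵢ + Aⱼ + AᵢAⱼ and bᵢ by bᵢ + bⱼ + Aᵢbⱼ (leaving the pair at index j unchanged). Then from any initial state one can perform a finite sequence of these operations to reach either a state in which bᵢ = eᵢ for all i ∈ [n], or a state in which bᵢ = 0 for some i. -/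
/-! Common framework: qubit gates, the Pauli group, the Clifford hierarchy,
permutation gates, Toffoli gates and staircase form, descending multiplications,
multilinear polynomial representations. -/

/-- Vectors in `𝔽₂ⁿ`, indexing computational basis states. -/
abbrev QV (n : ℕ) := Fin n → ZMod 2

/-- `n`-qubit gates: `2ⁿ × 2ⁿ` complex matrices indexed by `𝔽₂ⁿ`. -/
abbrev QMat (n : ℕ) := Matrix (QV n) (QV n) ℂ

/-- Standard basis vector `eᵢ` of `𝔽₂ⁿ`. -/
def stdBasis (n : ℕ) (i : Fin n) : QV n := fun m => if m = i then 1 else 0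

/-- The gate `X^u Z^z`, sending `|b⟩` to `(-1)^(z·b) |b+u⟩`. -/
noncomputable def XZGate (n : ℕ) (u z : QV n) : QMat n :=
  fun a b => if a = b + u then (-1 : ℂ) ^ (∑ i, (z i).val * (b i).val) else 0

/-- The Pauli group on `n` qubits: gates `c·P₁⊗⋯⊗Pₙ`, `c ∈ {±1, ±i}`,
`Pᵢ ∈ {I,X,Y,Z}`, equivalently phases times `X^u Z^z`. -/
def PauliGroup (n : ℕ) : Set (QMat n) :=
  { P | ∃ (c : ℂ) (u z : QV n),
      (c = 1 ∨ c = -1 ∨ c = Complex.I ∨ c = -Complex.I) ∧ P = c • XZGate n u z }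

/-- Level `k` of the Clifford hierarchy `𝒞ₖ` (level 1 is the Pauli group,
level 2 the Clifford group; level 0 is junk/empty). -/
def CliffordLevel (n : ℕ) : ℕ → Set (QMat n)
  | 0 => ∅
  | 1 => PauliGroup n
  | (k+2) => { U | U ∈ Matrix.unitaryGroup (QV n) ℂ ∧
      ∀ P ∈ PauliGroup n, U * P * star U ∈ CliffordLevel n (k+1) }

/-- The permutation gate of a permutation `f` of `𝔽₂ⁿ`: sends `|v⟩` to `|f v⟩`. -/
noncomputable def permGate (n : ℕ) (f : QV n ≃ QV n) : QMat n :=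
  fun a b => if a = f b then 1 else 0

/-- A diagonal gate. -/
def IsDiagonal (n : ℕ) (d : QMat n) : Prop := ∀ a b : QV n, a ≠ b → d a b = 0

/-- A gate is semi-Clifford if it equals `φ₁ d φ₂` for Clifford `φ₁, φ₂` and diagonal `d`. -/
def IsSemiClifford (n : ℕ) (U : QMat n) : Prop :=
  ∃ φ₁ d φ₂ : QMat n, φ₁ ∈ CliffordLevel n 2 ∧ φ₂ ∈ CliffordLevel n 2 ∧
    IsDiagonal n d ∧ U = φ₁ * d * φ₂

/-- The underlying map of the Toffoli gate `TOF_{i,j,k}`: `v ↦ v + (vᵢvⱼ)·eₖ`. -/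
def tofFun (n : ℕ) (i j k : Fin n) (v : QV n) : QV n :=
  fun m => if m = k then v m + v i * v j else v m

/-- A map on `𝔽₂ⁿ` is in staircase form if it is a product (applied left-to-right)
of pairwise distinct Toffoli gates `TOF_{i,j,k}` with `i<j<k` and with targets
nondecreasing in the order the gates are applied. -/
def IsStaircase (n : ℕ) (g : QV n → QV n) : Prop :=
  ∃ L : List (Fin n × Fin n × Fin n),
    L.Nodup ∧
    (∀ t ∈ L, t.1 < t.2.1 ∧ t.2.1 < t.2.2) ∧
    List.Chain' (fun s t => s.2.2 ≤ t.2.2) L ∧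
    g = fun v => L.foldl (fun w t => tofFun n t.1 t.2.1 t.2.2 w) v

/-- A descending multiplication on `𝔽₂ⁿ`: bilinear, associative, commutative,
`eᵢeᵢ = 0`, and for `i < j`, `eᵢeⱼ ∈ span{eₖ : k > j}`. -/
def IsDescendingMul (n : ℕ) (mul : QV n → QV n → QV n) : Prop :=
  (∀ u v w : QV n, mul (u + v) w = mul u w + mul v w) ∧
  (∀ u v w : QV n, mul u (v + w) = mul u v + mul u w) ∧
  (∀ u v w : QV n, mul (mul u v) w = mul u (mul v w)) ∧
  (∀ u v : QV n, mul u v = mul v u) ∧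
  (∀ i : Fin n, mul (stdBasis n i) (stdBasis n i) = 0) ∧
  (∀ i j : Fin n, i < j → ∀ m : Fin n, m ≤ j → mul (stdBasis n i) (stdBasis n j) m = 0)

/-- The product `∏_{i ∈ l} eᵢ` under a multiplication, for a list `l` (junk `0` on `[]`). -/
def dmProdList (n : ℕ) (mul : QV n → QV n → QV n) : List (Fin n) → QV n
  | [] => 0
  | [i] => stdBasis n i
  | i :: j :: rest => mul (stdBasis n i) (dmProdList n mul (j :: rest))

/-- The product `∏_{i ∈ T} eᵢ` under a multiplication. -/
def dmProd (n : ℕ) (mul : QV n → QV n → QV n) (T : Finset (Fin n)) : QV n :=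
  dmProdList n mul (T.sort (· ≤ ·))

/-- `g` is the map `∑_{i∈S} eᵢ ↦ ∑_{∅≠T⊆S} ∏_{i∈T} eᵢ` associated to a multiplication. -/
def dmPiSpec (n : ℕ) (mul : QV n → QV n → QV n) (g : QV n → QV n) : Prop :=
  ∀ S : Finset (Fin n),
    g (∑ i ∈ S, stdBasis n i) = ∑ T ∈ S.powerset.erase ∅, dmProd n mul T

/-- The bilinear extension of `eᵢeⱼ := g(eᵢ+eⱼ) + eᵢ + eⱼ`. -/
def inducedMul (n : ℕ) (g : QV n → QV n) (u v : QV n) : QV n :=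
  ∑ i : Fin n, ∑ j : Fin n,
    (u i * v j) • (g (stdBasis n i + stdBasis n j) + stdBasis n i + stdBasis n j)

/-- Coefficient of the monomial `∏_{i∈T} aᵢ` in the unique multilinear polynomial
over `𝔽₂` representing `g : 𝔽₂ⁿ → 𝔽₂` (Möbius inversion over `𝔽₂`). -/
def mlCoeff (n : ℕ) (g : QV n → ZMod 2) (T : Finset (Fin n)) : ZMod 2 :=
  ∑ R ∈ T.powerset, g (∑ i ∈ R, stdBasis n i)

/-- Strictly lower triangular matrix. -/
def StrictLowerTri (n : ℕ) (A : Matrix (Fin n) (Fin n) (ZMod 2)) : Prop :=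
  ∀ p q : Fin n, p ≤ q → A p q = 0

/-- Multiplication of basis vectors for the gate `U_k`: the basis of `𝔽₂^(2^k-1)` is
indexed by nonempty subsets `S ⊆ [k]`, encoded as indices `a` via the binary digits of
`a+1`; `e_S e_T = e_{S∪T}` if `S ∩ T = ∅` and `e_S e_T = 0` otherwise. -/
def ukBasisMul (k : ℕ) (a b : Fin (2 ^ k - 1)) : QV (2 ^ k - 1) :=
  if (a.val + 1) &&& (b.val + 1) = 0 then
    (if h : a.val + b.val + 1 < 2 ^ k - 1 then stdBasis (2 ^ k - 1) ⟨a.val + b.val + 1, h⟩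
     else 0)
  else 0

/-- The descending multiplication defining `U_k`, extended bilinearly. -/
def ukMul (k : ℕ) (u v : QV (2 ^ k - 1)) : QV (2 ^ k - 1) :=
  ∑ a : Fin (2 ^ k - 1), ∑ b : Fin (2 ^ k - 1), (u a * v b) • ukBasisMul k a b

/-- A state: a list of `n` pairs `(Aᵢ, bᵢ)` of an `n×n` matrix over `𝔽₂` and a vector. -/
abbrev PairState (n : ℕ) := Fin n → Matrix (Fin n) (Fin n) (ZMod 2) × QV n

/-- One allowed operation: a swap of two indices, or a compose at distinct indices
`i ≠ j`, replacing `Aᵢ` by `Aᵢ + Aⱼ + AᵢAⱼ` and `bᵢ` by `bᵢ + bⱼ + Aᵢbⱼ`. -/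
def pairStep (n : ℕ) (s t : PairState n) : Prop :=
  (∃ i j : Fin n, t = s ∘ (Equiv.swap i j)) ∨
  (∃ i j : Fin n, i ≠ j ∧
    t = Function.update s i
      ((s i).1 + (s j).1 + (s i).1 * (s j).1,
       (s i).2 + (s j).2 + (s i).1.mulVec ((s j).2)))

namespace Stmt15Aux

open Relation

lemma zmod2 : ∀ x : ZMod 2, x ≠ 0 → x = 1 := by decide

variable {n : ℕ}

/-- Index of lowest nonzero coordinate, `n` if `b = 0`. -/
noncomputable def nu (n : ℕ) (b : QV n) : ℕ :=
  sInf {m | n ≤ m ∨ ∃ h : m < n, b ⟨m, h⟩ ≠ 0}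

lemma nu_mem (b : QV n) : nu n b ∈ {m | n ≤ m ∨ ∃ h : m < n, b ⟨m, h⟩ ≠ 0} :=
  Nat.sInf_mem ⟨n, Or.inl le_rfl⟩

lemma nu_le (b : QV n) : nu n b ≤ n := Nat.sInf_le (Or.inl le_rfl)

lemma nu_below (b : QV n) (m : Fin n) (h : (m : ℕ) < nu n b) : b m = 0 := by
  have h2 := Nat.notMem_of_lt_sInf (s := {m | n ≤ m ∨ ∃ h : m < n, b ⟨m, h⟩ ≠ 0}) h
  simp only [Set.mem_setOf_eq, not_or, not_exists, not_not] at h2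
  have := h2.2 m.2
  simpa using this

lemma nu_spec (b : QV n) (h : nu n b < n) : b ⟨nu n b, h⟩ ≠ 0 := by
  rcases nu_mem b with h1 | ⟨h2, h3⟩
  · omega
  · exact h3

lemma nu_ge (b : QV n) (k : ℕ) (hk : k ≤ n) (h : ∀ m : Fin n, (m : ℕ) < k → b m = 0) :
    k ≤ nu n b := by
  by_contra hc
  push_neg at hc
  rcases nu_mem b with h1 | ⟨h2, h3⟩
  · omega
  · exact h3 (h ⟨nu n b, h2⟩ hc)

lemma eq_zero_of_nu (b : QV n) (h : n ≤ nu n b) : b = 0 :=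
  funext fun m => nu_below b m (lt_of_lt_of_le m.2 h)

lemma nu_lt_of_ne (b : QV n) (h : b ≠ 0) : nu n b < n := by
  rcases lt_or_ge (nu n b) n with h1 | h1
  · exact h1
  · exact absurd (eq_zero_of_nu b h1) h

/-- Strictly-lower-triangularity is preserved by the compose operation. -/
lemma slt_compose {A B : Matrix (Fin n) (Fin n) (ZMod 2)}
    (hA : StrictLowerTri n A) (hB : StrictLowerTri n B) :
    StrictLowerTri n (A + B + A * B) := by
  intro p q hpq
  have hAB : (A * B) p q = 0 := by
    rw [Matrix.mul_apply]
    apply Finset.sum_eq_zero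
    intro r _
    by_cases h : p ≤ r
    · rw [hA p r h, zero_mul]
    · rw [hB r q (le_trans (le_of_not_ge h) hpq), mul_zero]
  simp [Matrix.add_apply, hA p q hpq, hB p q hpq, hAB]

lemma mulVec_low {A : Matrix (Fin n) (Fin n) (ZMod 2)} (hA : StrictLowerTri n A)
    {c : QV n} {k : ℕ} (hc : ∀ m : Fin n, (m : ℕ) < k → c m = 0)
    (m : Fin n) (hm : (m : ℕ) ≤ k) : A.mulVec c m = 0 := by
  simp only [Matrix.mulVec, dotProduct]
  apply Finset.sum_eq_zero
  intro q _
  by_cases h : (q : ℕ) < k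
  · rw [hc q h, mul_zero]
  · have : m ≤ q := by
      rw [Fin.le_def]; omega
    show A m q * c q = 0
    rw [hA m q this, zero_mul]

def SLTs (s : PairState n) : Prop := ∀ i, StrictLowerTri n (s i).1

def Lead (b : QV n) (i : Fin n) : Prop := b i ≠ 0 ∧ ∀ m : Fin n, m < i → b m = 0

lemma lead_stdBasis (i : Fin n) : Lead (stdBasis n i) i := by
  constructor
  · simp [stdBasis]
  · intro m hm
    simp [stdBasis, Fin.ne_of_lt hm]

lemma lead_of_nu {b : QV n} {i : Fin n} (h : nu n b = (i : ℕ)) : Lead b i := by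
  constructor
  · have h1 : nu n b < n := h ▸ i.2
    have := nu_spec b h1
    have he : (⟨nu n b, h1⟩ : Fin n) = i := by
      ext; exact h
    rwa [he] at this
  · intro m hm
    exact nu_below b m (by rw [h]; exact hm)

/-- Any permutation of the state is reachable. -/
lemma perm_reach (σ : Equiv.Perm (Fin n)) (s : PairState n) :
    ReflTransGen (pairStep n) s (s ∘ σ) := by
  revert s
  refine Equiv.Perm.swap_induction_on (motive := fun σ => ∀ s : PairState n,
      ReflTransGen (pairStep n) s (s ∘ ⇑σ)) σ ?_ ?_
  · intro s
    have : s ∘ ⇑(1 : Equiv.Perm (Fin n)) = s := by funext i; rfl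
    rw [this]
  · intro f x y hxy ih s
    have h1 : pairStep n s (s ∘ Equiv.swap x y) := Or.inl ⟨x, y, rfl⟩
    have h2 := ih (s ∘ Equiv.swap x y)
    have h3 : (s ∘ ⇑(Equiv.swap x y)) ∘ ⇑f = s ∘ ⇑(Equiv.swap x y * f) := by
      funext i; simp [Equiv.Perm.mul_apply]
    exact (ReflTransGen.single h1).trans (h3 ▸ h2)


lemma sum_nu_le (s : PairState n) : ∑ k, nu n (s k).2 ≤ n * n := by
  calc ∑ k, nu n (s k).2 ≤ ∑ _k : Fin n, n := Finset.sum_le_sum fun k _ => nu_le _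
  _ = n * n := by simp [Finset.sum_const, mul_comm]

lemma phase1_step (s : PairState n) (hs : SLTs s) (i j : Fin n) (hij : i ≠ j)
    (hnzi : (s i).2 ≠ 0) (hnu : nu n (s i).2 = nu n (s j).2) :
    ∃ t, pairStep n s t ∧ SLTs t ∧
      ∑ k, nu n (s k).2 < ∑ k, nu n (t k).2 := by
  classical
  set v : ℕ := nu n (s i).2 with hv
  have hvn : v < n := nu_lt_of_ne _ hnzi
  set s' : PairState n := Function.update s i
      ((s i).1 + (s j).1 + (s i).1 * (s j).1,
       (s i).2 + (s j).2 + (s i).1.mulVec ((s j).2)) with hs'def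
  have hstep : pairStep n s s' := Or.inr ⟨i, j, hij, rfl⟩
  have hslt : SLTs s' := by
    intro k
    by_cases hk : k = i
    · subst hk
      simp only [hs'def, Function.update_self]
      exact slt_compose (hs k) (hs j)
    · simp only [hs'def, Function.update_of_ne hk]
      exact hs k
  have hival : (s' i).2 = (s i).2 + (s j).2 + (s i).1.mulVec ((s j).2) := by
    simp [hs'def]
  have hjlow : ∀ m : Fin n, (m : ℕ) < v → (s j).2 m = 0 := by
    intro m hm
    exact nu_below _ m (by omega)
  have hlow : ∀ m : Fin n, (m : ℕ) < v + 1 → (s' i).2 m = 0 := by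
    intro m hm
    have hmv : (m : ℕ) ≤ v := by omega
    have hmv3 : (s i).1.mulVec ((s j).2) m = 0 := mulVec_low (hs i) hjlow m hmv
    have heq : (s i).2 m = (s j).2 m := by
      rcases lt_or_eq_of_le hmv with h1 | h1
      · rw [nu_below (s i).2 m (by omega), hjlow m h1]
      · have hm1 : m = ⟨v, hvn⟩ := by ext; exact h1
        subst hm1
        have hi2 : nu n (s i).2 < n := by omega
        have hi1 : (s i).2 ⟨v, hvn⟩ ≠ 0 := by
          have := nu_spec (s i).2 hi2
          have he : (⟨nu n (s i).2, hi2⟩ : Fin n) = ⟨v, hvn⟩ := by ext; simp [hv]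
          rwa [he] at this
        have hj2 : nu n (s j).2 < n := by omega
        have hj1 : (s j).2 ⟨v, hvn⟩ ≠ 0 := by
          have := nu_spec (s j).2 hj2
          have he : (⟨nu n (s j).2, hj2⟩ : Fin n) = ⟨v, hvn⟩ := by ext; simp; omega
          rwa [he] at this
        rw [zmod2 _ hi1, zmod2 _ hj1]
    rw [hival]
    simp only [Pi.add_apply, Matrix.mulVec]
    rw [heq]
    have : (s i).1.mulVec ((s j).2) m = 0 := hmv3
    simp only [Matrix.mulVec] at this
    rw [this]
    have : ∀ x : ZMod 2, x + x + 0 = 0 := by decide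
    exact this _
  have hnu' : v + 1 ≤ nu n (s' i).2 := nu_ge _ _ (by omega) hlow
  refine ⟨s', hstep, hslt, ?_⟩
  have hfun : (fun k => nu n (s' k).2) =
      Function.update (fun k => nu n (s k).2) i (nu n (s' i).2) := by
    funext k
    by_cases hk : k = i
    · subst hk; simp
    · simp [hs'def, Function.update_of_ne hk]
  have h1 : ∑ k, nu n (s' k).2 =
      nu n (s' i).2 + ∑ k ∈ Finset.univ.erase i, nu n (s k).2 := by
    rw [show (∑ k, nu n (s' k).2) = ∑ k, (Function.update (fun k => nu n (s k).2) i (nu n (s' i).2)) k from by rw [← hfun]]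
    rw [Finset.sum_update_of_mem (Finset.mem_univ i)]
    congr 1
    exact Finset.sum_congr (by rw [Finset.sdiff_singleton_eq_erase]) (fun _ _ => rfl)
  have h2 : ∑ k, nu n (s k).2 =
      v + ∑ k ∈ Finset.univ.erase i, nu n (s k).2 := by
    exact (Finset.add_sum_erase _ _ (Finset.mem_univ i)).symm
  omega


lemma phase1 : ∀ (N : ℕ) (s : PairState n), SLTs s →
    n * n ≤ N + ∑ k, nu n (s k).2 →
    ∃ t, ReflTransGen (pairStep n) s t ∧ SLTs t ∧
      ((∃ i, (t i).2 = 0) ∨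
        ((∀ i, (t i).2 ≠ 0) ∧ Function.Injective fun i => nu n (t i).2)) := by
  intro N
  induction N with
  | zero =>
    intro s hs hsum
    by_cases hz : ∃ i, (s i).2 = 0
    · exact ⟨s, ReflTransGen.refl, hs, Or.inl hz⟩
    push_neg at hz
    by_cases hinj : Function.Injective fun i => nu n (s i).2
    · exact ⟨s, ReflTransGen.refl, hs, Or.inr ⟨hz, hinj⟩⟩
    obtain ⟨i, j, hnu, hij⟩ := Function.not_injective_iff.mp hinj
    obtain ⟨t, _, _, hlt⟩ := phase1_step s hs i j hij (hz i) hnu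
    have := sum_nu_le t
    omega
  | succ N ih =>
    intro s hs hsum
    by_cases hz : ∃ i, (s i).2 = 0
    · exact ⟨s, ReflTransGen.refl, hs, Or.inl hz⟩
    push_neg at hz
    by_cases hinj : Function.Injective fun i => nu n (s i).2
    · exact ⟨s, ReflTransGen.refl, hs, Or.inr ⟨hz, hinj⟩⟩
    obtain ⟨i, j, hnu, hij⟩ := Function.not_injective_iff.mp hinj
    obtain ⟨t1, hstep, hslt, hlt⟩ := phase1_step s hs i j hij (hz i) hnu
    obtain ⟨t, h1, h2, h3⟩ := ih t1 hslt (by omega)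
    exact ⟨t, (ReflTransGen.single hstep).trans h1, h2, h3⟩

lemma clear (i : Fin n) : ∀ (K : ℕ) (s : PairState n), SLTs s →
    (∀ j, Lead (s j).2 j) →
    (∀ m : Fin n, (m : ℕ) + K < n → (s i).2 m = stdBasis n i m) →
    ∃ t, ReflTransGen (pairStep n) s t ∧ SLTs t ∧
      (∀ j, j ≠ i → t j = s j) ∧ (t i).2 = stdBasis n i ∧ (∀ j, Lead (t j).2 j) := by
  intro K
  induction K with
  | zero =>
    intro s hs hl hag
    refine ⟨s, ReflTransGen.refl, hs, fun j _ => rfl, ?_, hl⟩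
    funext m
    exact hag m (by have := m.2; omega)
  | succ K ih =>
    intro s hs hl hag
    by_cases h : ∀ m : Fin n, (m : ℕ) + K < n → (s i).2 m = stdBasis n i m
    · exact ih s hs hl h
    push_neg at h
    obtain ⟨m, hmK, hmne⟩ := h
    have hmeq : (m : ℕ) + K + 1 = n := by
      have h2 : ¬((m : ℕ) + (K + 1) < n) := fun hlt => hmne (hag m hlt)
      omega
    have him : i < m := by
      rcases lt_trichotomy m i with h1 | h1 | h1
      · exfalso
        exact hmne (by rw [(hl i).2 m h1]; simp [stdBasis, Fin.ne_of_lt h1])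
      · exfalso
        subst h1
        exact hmne (by rw [zmod2 _ (hl m).1]; simp [stdBasis])
      · exact h1
    have hi_ne_m : i ≠ m := Fin.ne_of_lt him
    set s' : PairState n := Function.update s i
        ((s i).1 + (s m).1 + (s i).1 * (s m).1,
         (s i).2 + (s m).2 + (s i).1.mulVec ((s m).2)) with hs'def
    have hstep : pairStep n s s' := Or.inr ⟨i, m, hi_ne_m, rfl⟩
    have hslt : SLTs s' := by
      intro k
      by_cases hk : k = i
      · subst hk
        simp only [hs'def, Function.update_self]
        exact slt_compose (hs k) (hs m)
      · simp only [hs'def, Function.update_of_ne hk]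
        exact hs k
    have hival : (s' i).2 = (s i).2 + (s m).2 + (s i).1.mulVec ((s m).2) := by
      simp [hs'def]
    have hmlow : ∀ q : Fin n, (q : ℕ) < (m : ℕ) → (s m).2 q = 0 := by
      intro q hq
      exact (hl m).2 q (Fin.lt_def.mpr hq)
    have hag' : ∀ q : Fin n, (q : ℕ) + K < n → (s' i).2 q = stdBasis n i q := by
      intro q hq
      have hqm : (q : ℕ) ≤ (m : ℕ) := by omega
      have hmv3 : (s i).1.mulVec ((s m).2) q = 0 := mulVec_low (hs i) hmlow q hqm
      rw [hival]
      simp only [Pi.add_apply]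
      rw [hmv3, add_zero]
      rcases lt_or_eq_of_le hqm with h1 | h1
      · rw [hmlow q h1, add_zero]
        exact hag q (by omega)
      · have hq1 : q = m := Fin.ext h1
        subst hq1
        have hq2 : (s i).2 q ≠ 0 := by
          intro h0
          exact hmne (by rw [h0]; simp [stdBasis, Fin.ne_of_lt him, (Fin.ne_of_lt him).symm])
        rw [zmod2 _ hq2, zmod2 _ (hl q).1]
        simp [stdBasis, (Fin.ne_of_lt him).symm]
        decide
    have hl' : ∀ j, Lead (s' j).2 j := by
      intro j
      by_cases hj : j = i
      · subst hj
        constructor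
        · rw [hag' j (by have := Fin.lt_def.mp him; omega)]
          simp [stdBasis]
        · intro q hq
          have hq2 : (q : ℕ) + K < n := by
            have := Fin.lt_def.mp hq
            have := Fin.lt_def.mp him
            omega
          rw [hag' q hq2]
          simp [stdBasis, Fin.ne_of_lt hq]
      · rw [hs'def, Function.update_of_ne hj]
        exact hl j
    obtain ⟨t, ht1, ht2, ht3, ht4, ht5⟩ := ih s' hslt hl' hag'
    refine ⟨t, (ReflTransGen.single hstep).trans ht1, ht2, ?_, ht4, ht5⟩
    intro j hj
    rw [ht3 j hj, hs'def, Function.update_of_ne hj]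

lemma phase2 : ∀ (l : List (Fin n)) (s : PairState n), SLTs s →
    (∀ j, Lead (s j).2 j) →
    ∃ t, ReflTransGen (pairStep n) s t ∧ (∀ j ∈ l, (t j).2 = stdBasis n j) ∧
      (∀ j, j ∉ l → t j = s j) := by
  intro l
  induction l with
  | nil =>
    intro s hs hl
    exact ⟨s, ReflTransGen.refl, by simp, fun _ _ => rfl⟩
  | cons a l ih =>
    intro s hs hl
    obtain ⟨t1, h1, hs1, hne1, hb1, hl1⟩ := clear a n s hs hl
      (fun q hq => absurd hq (by have := q.2; omega))
    obtain ⟨t, h2, hmem, hnot⟩ := ih t1 hs1 hl1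
    refine ⟨t, h1.trans h2, ?_, ?_⟩
    · intro j hj
      rcases List.mem_cons.mp hj with rfl | hj'
      · by_cases hja : j ∈ l
        · exact hmem j hja
        · rw [hnot j hja]; exact hb1
      · exact hmem j hj'
    · intro j hj
      rw [hnot j (fun h => hj (List.mem_cons_of_mem _ h)),
          hne1 j (fun h => hj (by rw [h]; exact List.mem_cons_self))]

end Stmt15Aux



/-- From any initial state whose matrices are strictly lower triangular,
a finite sequence of swaps and composes reaches a state with `bᵢ = eᵢ` for all `i`, or
a state with `bᵢ = 0` for some `i`. -/
theorem stmt15 (n : ℕ) (s : PairState n)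
    (hs : ∀ i, StrictLowerTri n (s i).1) :
    ∃ t : PairState n, Relation.ReflTransGen (pairStep n) s t ∧
      ((∀ i, (t i).2 = stdBasis n i) ∨ (∃ i, (t i).2 = 0)) := by
  classical
  open Stmt15Aux in
  obtain ⟨t1, h1, hs1, hcase⟩ := Stmt15Aux.phase1 (n * n) s hs (by omega)
  rcases hcase with ⟨i, hi⟩ | ⟨hnz, hinj⟩
  · exact ⟨t1, h1, Or.inr ⟨i, hi⟩⟩
  · set f : Fin n → Fin n := fun k => ⟨Stmt15Aux.nu n (t1 k).2,
      Stmt15Aux.nu_lt_of_ne _ (hnz k)⟩ with hf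
    have hfinj : Function.Injective f := by
      intro a b hab
      exact hinj (congrArg Fin.val hab)
    have hbij := Finite.injective_iff_bijective.mp hfinj
    set σ := Equiv.ofBijective f hbij with hσ
    set t2 : PairState n := t1 ∘ ⇑σ.symm with ht2
    have reach2 : Relation.ReflTransGen (pairStep n) t1 t2 := Stmt15Aux.perm_reach σ.symm t1
    have hs2 : Stmt15Aux.SLTs t2 := fun k => hs1 (σ.symm k)
    have hl2 : ∀ j, Stmt15Aux.Lead (t2 j).2 j := by
      intro j
      apply Stmt15Aux.lead_of_nu
      show Stmt15Aux.nu n (t1 (σ.symm j)).2 = (j : ℕ)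
      have hfs : f (σ.symm j) = j := σ.apply_symm_apply j
      exact congrArg Fin.val hfs
    obtain ⟨t, h3, hmem, _⟩ := Stmt15Aux.phase2 (List.finRange n) t2 hs2 hl2
    exact ⟨t, (h1.trans reach2).trans h3, Or.inl fun i => hmem i (List.mem_finRange i)⟩
end

section
/- Let π be a permutation gate in 𝒞₃. Then π is in staircase form if and only if all of the following hold: π(0) = 0; π(eᵢ) = eᵢ for all i ∈ [n]; and for every vector v ∈ 𝔽₂ⁿ with at least two nonzero coordinates, the indices of the first two nonzero coordinates of v coincide with the indices of the first two nonzero coordinates of π(v). -/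
/-- `i` and `j` are the indices of the first two nonzero coordinates of `v`. -/
def FirstTwoIndices (n : ℕ) (v : QV n) (i j : Fin n) : Prop :=
  i < j ∧ v i = 1 ∧ v j = 1 ∧ ∀ m : Fin n, m < j → m ≠ i → v m = 0

-- basic ZMod 2
lemma zmod2_cases (a : ZMod 2) : a = 0 ∨ a = 1 := by revert a; decide
lemma zmod2_add_self (a : ZMod 2) : a + a = 0 := by
  rcases zmod2_cases a with h | h <;> (rw [h]; decide)

lemma tof_zero (n : ℕ) (i j k : Fin n) : tofFun n i j k 0 = 0 := by
  funext m; simp [tofFun]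

lemma tof_std (n : ℕ) (i j k : Fin n) (hij : i < j) (s : Fin n) :
    tofFun n i j k (stdBasis n s) = stdBasis n s := by
  funext m
  simp only [tofFun, stdBasis]
  split
  · rcases eq_or_ne i s with rfl | hi
    · have : (if j = i then (1:ZMod 2) else 0) = 0 := by
        simp [Fin.ne_of_gt hij]
      simp [this]
    · have : (if i = s then (1:ZMod 2) else 0) = 0 := by simp [hi]
      simp [this]
  · rfl

lemma tof_firstTwo (n : ℕ) (a b c : Fin n) (hab : a < b) (hbc : b < c)
    (v : QV n) (i j : Fin n) (h : FirstTwoIndices n v i j) :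
    FirstTwoIndices n (tofFun n a b c v) i j := by
  obtain ⟨hij, hvi, hvj, hmin⟩ := h
  rcases zmod2_cases (v a * v b) with h0 | h1
  · have : tofFun n a b c v = v := by
      funext m; simp only [tofFun]; split
      · rw [h0, add_zero]
      · rfl
    rw [this]; exact ⟨hij, hvi, hvj, hmin⟩
  · -- both controls are 1, so b ≥ j, hence c > j
    have hva : v a = 1 := by
      rcases zmod2_cases (v a) with h | h
      · rw [h, zero_mul] at h1; exact absurd h1 one_ne_zero.symm
      · exact h
    have hvb : v b = 1 := by
      rcases zmod2_cases (v b) with h | h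
      · rw [h, mul_zero] at h1; exact absurd h1 one_ne_zero.symm
      · exact h
    have hbj : j ≤ b := by
      by_contra hlt
      push_neg at hlt
      -- b < j, v b = 1 so b = i; then a < i, v a = 1, a < j, a ≠ i: contradiction
      have hbi : b = i := by
        by_contra hne
        have := hmin b hlt hne
        rw [this] at hvb; exact absurd hvb.symm one_ne_zero
      have hai : a ≠ i := by rw [← hbi]; exact Fin.ne_of_lt hab
      have haj : a < j := lt_trans (hbi ▸ hab) hlt
      have := hmin a haj hai
      rw [this] at hva; exact absurd hva zero_ne_one
    have hcj : j < c := lt_of_le_of_lt hbj hbc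
    refine ⟨hij, ?_, ?_, ?_⟩
    · have : i ≠ c := Fin.ne_of_lt (lt_trans hij hcj)
      simp only [tofFun, this, if_neg this]; exact hvi
    · have : j ≠ c := Fin.ne_of_lt hcj
      simp only [tofFun, if_neg this]; exact hvj
    · intro m hm hmi
      have : m ≠ c := Fin.ne_of_lt (lt_trans hm hcj)
      simp only [tofFun, if_neg this]; exact hmin m hm hmi

abbrev tofStep (n : ℕ) : QV n → (Fin n × Fin n × Fin n) → QV n :=
  fun w t => tofFun n t.1 t.2.1 t.2.2 w

lemma foldl_preserve {n : ℕ} (P : QV n → Prop)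
    (hP : ∀ (t : Fin n × Fin n × Fin n) (w : QV n), t.1 < t.2.1 → t.2.1 < t.2.2 → P w → P (tofStep n w t))
    (L : List (Fin n × Fin n × Fin n)) (hL : ∀ t ∈ L, t.1 < t.2.1 ∧ t.2.1 < t.2.2) :
    ∀ v : QV n, P v → P (L.foldl (tofStep n) v) := by
  induction L with
  | nil => intro v hv; exact hv
  | cons t L ih =>
    intro v hv
    have ht := hL t (List.mem_cons_self)
    exact ih (fun s hs => hL s (List.mem_cons_of_mem t hs)) _ (hP t v ht.1 ht.2 hv)

-- coordinate untouched if never a target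
lemma foldl_coord_const {n : ℕ} (L : List (Fin n × Fin n × Fin n)) (m : Fin n)
    (hm : ∀ t ∈ L, m ≠ t.2.2) :
    ∀ v : QV n, (L.foldl (tofStep n) v) m = v m := by
  induction L with
  | nil => intro v; rfl
  | cons t L ih =>
    intro v
    rw [List.foldl_cons, ih (fun s hs => hm s (List.mem_cons_of_mem t hs)) _]
    simp only [tofStep, tofFun, if_neg (hm t (List.mem_cons_self))]

/-- Key fold identity: for a sorted staircase list, each coordinate of the output is
the input coordinate plus the sum of products of output controls over gates targeting it. -/
lemma foldl_coord {n : ℕ} (L : List (Fin n × Fin n × Fin n))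
    (hL : ∀ t ∈ L, t.1 < t.2.1 ∧ t.2.1 < t.2.2)
    (hsort : L.Pairwise (fun s t => s.2.2 ≤ t.2.2)) :
    ∀ (v : QV n) (m : Fin n),
      (L.foldl (tofStep n) v) m = v m +
        (L.map (fun t => if t.2.2 = m then
            (L.foldl (tofStep n) v) t.1 * (L.foldl (tofStep n) v) t.2.1 else 0)).sum := by
  induction L with
  | nil => intro v m; simp
  | cons t L ih =>
    intro v m
    obtain ⟨ht1, ht2⟩ := hL t (List.mem_cons_self)
    have hLtail : ∀ s ∈ L, s.1 < s.2.1 ∧ s.2.1 < s.2.2 :=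
      fun s hs => hL s (List.mem_cons_of_mem t hs)
    have hsorttail := (List.pairwise_cons.mp hsort).2
    have hhead := (List.pairwise_cons.mp hsort).1
    set w := (t :: L).foldl (tofStep n) v with hw
    have hw' : w = L.foldl (tofStep n) (tofStep n v t) := by rw [hw, List.foldl_cons]
    rcases eq_or_ne t.2.2 m with rfl | hne
    · -- m is the target of the head gate
      have hc1 : w t.1 = v t.1 := by
        rw [hw, List.foldl_cons, foldl_coord_const L t.1
          (fun s hs => Fin.ne_of_lt (lt_of_lt_of_le (lt_trans ht1 ht2) (hhead s hs)))]
        simp only [tofStep, tofFun, if_neg (Fin.ne_of_lt (lt_trans ht1 ht2))]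
      have hc2 : w t.2.1 = v t.2.1 := by
        rw [hw, List.foldl_cons, foldl_coord_const L t.2.1
          (fun s hs => Fin.ne_of_lt (lt_of_lt_of_le ht2 (hhead s hs)))]
        simp only [tofStep, tofFun, if_neg (Fin.ne_of_lt ht2)]
      rw [hw', ih hLtail hsorttail]
      simp only [List.map_cons, List.sum_cons, ← hw']
      simp only [if_true]
      have : tofStep n v t t.2.2 = v t.2.2 + v t.1 * v t.2.1 := by
        simp only [tofStep, tofFun, if_pos rfl, if_true]
      rw [this, hc1, hc2]
      ring
    · -- m is not the target of the head gate
      rw [hw', ih hLtail hsorttail]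
      simp only [List.map_cons, List.sum_cons, ← hw']
      rw [if_neg hne]
      have : tofStep n v t m = v m := by
        simp only [tofStep, tofFun]
        rw [if_neg]
        intro h; exact hne (h ▸ rfl)
      rw [this, zero_add]

section ListHelpers
variable {α β : Type*}

lemma sum_map_flatMap {M : Type*} [AddCommMonoid M] (l : List α) (f : α → List β) (g : β → M) :
    ((l.flatMap f).map g).sum = (l.map (fun a => ((f a).map g).sum)).sum := by
  induction l with
  | nil => rfl
  | cons a l ih => simp [List.flatMap_cons, ih]

lemma pairwise_of_forall_mem {R : α → α → Prop} (l : List α)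
    (h : ∀ x ∈ l, ∀ y ∈ l, R x y) : l.Pairwise R := by
  induction l with
  | nil => exact List.Pairwise.nil
  | cons a l ih =>
    refine List.Pairwise.cons (fun b hb => h a (List.mem_cons_self) b (List.mem_cons_of_mem a hb)) ?_
    exact ih (fun x hx y hy => h x (List.mem_cons_of_mem a hx) y (List.mem_cons_of_mem a hy))

lemma nodup_flatMap_key (l : List α) (f : α → List β) (key : β → α)
    (hl : l.Nodup) (hf : ∀ a, (f a).Nodup) (hk : ∀ a ∈ l, ∀ b ∈ f a, key b = a) :
    (l.flatMap f).Nodup := by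
  induction l with
  | nil => exact List.nodup_nil
  | cons a l ih =>
    rw [List.flatMap_cons, List.nodup_append]
    refine ⟨hf a, ih (List.nodup_cons.mp hl).2
        (fun a' ha' b hb => hk a' (List.mem_cons_of_mem a ha') b hb), ?_⟩
    intro b hb b' hb' hbb'
    subst hbb'
    have h1 := hk a (List.mem_cons_self) b hb
    obtain ⟨a', ha', hba'⟩ := List.mem_flatMap.mp hb'
    have h2 := hk a' (List.mem_cons_of_mem a ha') b hba'
    exact (List.nodup_cons.mp hl).1 (h1 ▸ h2 ▸ ha')

lemma pairwise_flatMap_key (l : List α) (f : α → List β) (key : β → α)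
    (r : α → α → Prop) (hrefl : ∀ a, r a a)
    (hl : l.Pairwise r) (hk : ∀ a ∈ l, ∀ b ∈ f a, key b = a) :
    (l.flatMap f).Pairwise (fun x y => r (key x) (key y)) := by
  induction l with
  | nil => exact List.Pairwise.nil
  | cons a l ih =>
    rw [List.flatMap_cons, List.pairwise_append]
    have hka := hk a (List.mem_cons_self)
    refine ⟨pairwise_of_forall_mem _ (fun x hx y hy => by rw [hka x hx, hka y hy]; exact hrefl a),
      ih (List.pairwise_cons.mp hl).2 (fun a' ha' b hb => hk a' (List.mem_cons_of_mem a ha') b hb), ?_⟩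
    intro x hx y hy
    obtain ⟨a', ha', hya'⟩ := List.mem_flatMap.mp hy
    rw [hka x hx, hk a' (List.mem_cons_of_mem a ha') y hya']
    exact (List.pairwise_cons.mp hl).1 a' ha'

lemma mem_if_singleton {b x : β} {c : Prop} [Decidable c] :
    b ∈ (if c then [x] else []) ↔ c ∧ b = x := by
  split <;> simp_all

end ListHelpers

section Matrices
variable {n : ℕ} (f : QV n ≃ QV n)

lemma XZ_mem_pauli (u z : QV n) : XZGate n u z ∈ PauliGroup n :=
  ⟨1, u, z, Or.inl rfl, (one_smul ℂ _).symm⟩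

/-- exponent count for the diagonal conjugate -/
def Ncount (z : QV n) (b : QV n) : ℕ := ∑ i, (z i).val * ((f.symm b) i).val

noncomputable def diagConj (z : QV n) : QMat n :=
  fun a b => if a = b then (-1 : ℂ) ^ (Ncount f z b) else 0

lemma permGate_conj_diag (z : QV n) :
    permGate n f * XZGate n 0 z * star (permGate n f) = diagConj f z := by
  funext a b
  have h1 : ∀ (M : QMat n) (a b : QV n), (permGate n f * M) a b = M (f.symm a) b := by
    intro M a b
    rw [Matrix.mul_apply]
    have : ∀ c : QV n, permGate n f a c * M c b = if c = f.symm a then M c b else 0 := by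
      intro c
      by_cases h : c = f.symm a
      · subst h; simp [permGate]
      · have : a ≠ f c := by
          intro hh; exact h (by rw [hh, Equiv.symm_apply_apply])
        simp [permGate, this, h]
    rw [Finset.sum_congr rfl (fun c _ => this c), Finset.sum_ite_eq' Finset.univ (f.symm a)]
    simp
  have h2 : ∀ (M : QMat n) (a b : QV n), (M * star (permGate n f)) a b = M a (f.symm b) := by
    intro M a b
    rw [Matrix.mul_apply]
    have : ∀ c : QV n, M a c * (star (permGate n f)) c b = if c = f.symm b then M a c else 0 := by
      intro c
      rw [Matrix.star_apply]
      by_cases h : c = f.symm b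
      · subst h; simp [permGate]
      · have : b ≠ f c := by
          intro hh; exact h (by rw [hh, Equiv.symm_apply_apply])
        simp [permGate, this, h]
    rw [Finset.sum_congr rfl (fun c _ => this c), Finset.sum_ite_eq' Finset.univ (f.symm b)]
    simp
  rw [Matrix.mul_assoc, h1, h2]
  simp only [XZGate, diagConj, Ncount, add_zero]
  by_cases h : a = b
  · subst h; simp
  · have : f.symm a ≠ f.symm b := fun hh => h (f.symm.injective hh)
    simp [this, h]

end Matrices

section Matrices2
variable {n : ℕ} (f : QV n ≃ QV n)

lemma diag_conj_X (z w : QV n) :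
    diagConj f z * XZGate n w 0 * star (diagConj f z) =
      fun a b => if a = b + w then (-1:ℂ) ^ (Ncount f z (b+w)) * (-1:ℂ) ^ (Ncount f z b) else 0 := by
  funext a b
  have h1 : ∀ (M : QMat n) (a b : QV n), (diagConj f z * M) a b = (-1:ℂ) ^ (Ncount f z a) * M a b := by
    intro M a b
    rw [Matrix.mul_apply]
    have : ∀ c : QV n, diagConj f z a c * M c b = if c = a then (-1:ℂ)^(Ncount f z a) * M c b else 0 := by
      intro c
      by_cases h : c = a
      · subst h; simp [diagConj]
      · simp [diagConj, h, Ne.symm h]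
    rw [Finset.sum_congr rfl (fun c _ => this c), Finset.sum_ite_eq' Finset.univ a]
    simp
  have h2 : ∀ (M : QMat n) (a b : QV n), (M * star (diagConj f z)) a b = M a b * (-1:ℂ) ^ (Ncount f z b) := by
    intro M a b
    rw [Matrix.mul_apply]
    have : ∀ c : QV n, M a c * (star (diagConj f z)) c b = if c = b then M a c * (-1:ℂ)^(Ncount f z b) else 0 := by
      intro c
      rw [Matrix.star_apply]
      by_cases h : c = b
      · subst h
        simp only [diagConj, if_pos rfl, if_true]
        rw [star_pow, star_neg, star_one]
      · simp [diagConj, Ne.symm h, h]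
    rw [Finset.sum_congr rfl (fun c _ => this c), Finset.sum_ite_eq' Finset.univ b]
    simp
  rw [Matrix.mul_assoc, h1, h2]
  simp only [XZGate]
  by_cases h : a = b + w
  · subst h
    simp only [if_pos rfl]
    have : ∀ i, ((0 : QV n) i).val * ((b i).val) = 0 := by intro i; simp
    rw [Finset.sum_congr rfl (fun i _ => this i)]
    simp
  · simp [h]

end Matrices2

section Extraction
variable {n : ℕ} (f : QV n ≃ QV n)

lemma neg_one_pow_cast {a b : ℕ} (h : (-1:ℂ)^a = (-1:ℂ)^b) : (a : ZMod 2) = (b : ZMod 2) := by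
  rw [← ZMod.natCast_mod a 2, ← ZMod.natCast_mod b 2]
  rcases Nat.even_or_odd a with ha | ha <;> rcases Nat.even_or_odd b with hb | hb
  · rw [Nat.even_iff.mp ha, Nat.even_iff.mp hb]
  · rw [ha.neg_one_pow, hb.neg_one_pow] at h; norm_num at h
  · rw [ha.neg_one_pow, hb.neg_one_pow] at h; norm_num at h
  · rw [Nat.odd_iff.mp ha, Nat.odd_iff.mp hb]

lemma cast_sum_val (z x : QV n) :
    ((∑ i, (z i).val * (x i).val : ℕ) : ZMod 2) = ∑ i, z i * x i := by
  push_cast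
  refine Finset.sum_congr rfl (fun i _ => ?_)
  rw [ZMod.natCast_val, ZMod.natCast_val, ZMod.cast_id, ZMod.cast_id]

lemma neg_one_pow_ne_zero' (k : ℕ) : ((-1:ℂ))^k ≠ 0 := pow_ne_zero k (by norm_num)

lemma second_diff_exists (hf : permGate n f ∈ CliffordLevel n 3) (z w : QV n) :
    ∃ (ε : ZMod 2) (t : QV n), ∀ x : QV n,
      (∑ i, z i * f.symm (x + w) i) + (∑ i, z i * f.symm x i) = ε + ∑ i, t i * x i := by
  have hD : diagConj f z ∈ CliffordLevel n 2 := by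
    have := hf.2 (XZGate n 0 z) (XZ_mem_pauli 0 z)
    rwa [permGate_conj_diag] at this
  have hE := hD.2 (XZGate n w 0) (XZ_mem_pauli w 0)
  rw [diag_conj_X] at hE
  obtain ⟨c, u', z', hc, hEeq⟩ := hE
  -- pin u' = w
  have hu : u' = w := by
    have h0 := congrFun (congrFun hEeq (0 + w)) 0
    simp only [Matrix.smul_apply, XZGate, smul_eq_mul, if_pos rfl] at h0
    by_contra hne
    have hne' : (0 : QV n) + w ≠ 0 + u' := by
      intro hh
      rw [zero_add, zero_add] at hh
      exact hne hh.symm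
    rw [if_neg hne', mul_zero] at h0
    exact (mul_ne_zero (neg_one_pow_ne_zero' _) (neg_one_pow_ne_zero' _)) h0
  rw [hu] at hEeq
  -- main pointwise identity
  have key : ∀ x : QV n, (-1:ℂ) ^ (Ncount f z (x + w)) * (-1:ℂ) ^ (Ncount f z x)
      = c * (-1:ℂ) ^ (∑ i, (z' i).val * (x i).val) := by
    intro x
    have h0 := congrFun (congrFun hEeq (x + w)) x
    simp only [Matrix.smul_apply, XZGate, smul_eq_mul, if_pos rfl] at h0
    exact h0
  -- c is ±1

  have hcval : c = (-1:ℂ) ^ (Ncount f z (0 + w) + Ncount f z 0 + ∑ i, (z' i).val * (((0:QV n)) i).val) := by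
    have h0 := key 0
    rw [pow_add, pow_add]
    rw [h0, mul_assoc, ← pow_add, ← two_mul, (even_two_mul _).neg_one_pow, mul_one]
  set εnat : ℕ := Ncount f z (0 + w) + Ncount f z 0 + ∑ i, (z' i).val * (((0:QV n)) i).val with hε
  refine ⟨(εnat : ZMod 2), z', fun x => ?_⟩
  have hx := key x
  rw [hcval, ← pow_add, ← pow_add] at hx
  have := neg_one_pow_cast hx
  rw [Nat.cast_add, Nat.cast_add, cast_sum_val] at this
  calc (∑ i, z i * f.symm (x + w) i) + (∑ i, z i * f.symm x i)
      = ((Ncount f z (x + w) : ℕ) : ZMod 2) + ((Ncount f z x : ℕ) : ZMod 2) := by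
        simp only [Ncount]; rw [cast_sum_val, cast_sum_val]
    _ = (εnat : ZMod 2) + ∑ i, z' i * x i := this
end Extraction

section Core
variable {n : ℕ}

/-- support of a vector -/
def suppV (v : QV n) : Finset (Fin n) := Finset.univ.filter (fun m => v m = 1)

lemma mem_suppV {v : QV n} {m : Fin n} : m ∈ suppV v ↔ v m = 1 := by
  simp [suppV]

lemma not_mem_suppV {v : QV n} {m : Fin n} (h : m ∉ suppV v) : v m = 0 := by
  rcases zmod2_cases (v m) with h0 | h1
  · exact h0
  · exact absurd (mem_suppV.mpr h1) h

lemma suppV_eq_empty {v : QV n} (h : suppV v = ∅) : v = 0 := by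
  funext m
  exact not_mem_suppV (h ▸ Finset.notMem_empty m)

lemma suppV_add_std {v : QV n} {a : Fin n} (ha : a ∈ suppV v) :
    suppV (v + stdBasis n a) = (suppV v).erase a := by
  ext m
  rcases eq_or_ne m a with rfl | hne
  · simp only [Finset.mem_erase, ne_eq, not_true_eq_false, false_and, iff_false]
    intro hmem
    have := mem_suppV.mp hmem
    have hv := mem_suppV.mp ha
    simp only [Pi.add_apply, stdBasis, if_pos rfl, hv] at this
    exact absurd this (by decide)
  · simp only [Finset.mem_erase, ne_eq, hne, not_false_eq_true, true_and]
    rw [mem_suppV, mem_suppV, Pi.add_apply]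
    simp [stdBasis, hne]

lemma suppV_single {v : QV n} {a : Fin n} (h : suppV v = {a}) : v = stdBasis n a := by
  funext m
  rcases eq_or_ne m a with rfl | hne
  · have : m ∈ suppV v := h ▸ Finset.mem_singleton_self m
    rw [mem_suppV.mp this]; simp [stdBasis]
  · have : m ∉ suppV v := by rw [h]; simp [hne]
    rw [not_mem_suppV this]; simp [stdBasis, hne]

variable (f : QV n ≃ QV n)

/-- quadratic coefficients -/
def cCoef (k i j : Fin n) : ZMod 2 :=
  f.symm (stdBasis n i + stdBasis n j) k + stdBasis n i k + stdBasis n j k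

/-- the quadratic map -/
def qMap (v : QV n) : QV n :=
  fun k => ∑ i, ∑ j, (if i < j then cCoef f k i j else 0) * (v i * v j)

lemma cCoef_symm (k i j : Fin n) : cCoef f k i j = cCoef f k j i := by
  unfold cCoef; rw [add_comm (stdBasis n i) (stdBasis n j)]; ring

lemma qMap_zero : qMap f 0 = 0 := by
  funext k
  unfold qMap
  simp

lemma qMap_std (a : Fin n) : qMap f (stdBasis n a) = 0 := by
  funext k
  unfold qMap
  rw [show (0:QV n) k = 0 from rfl]
  refine Finset.sum_eq_zero (fun i _ => Finset.sum_eq_zero (fun j _ => ?_))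
  rcases eq_or_ne i a with rfl | hi
  · rcases eq_or_ne j i with rfl | hj
    · simp
    · have : stdBasis n j = stdBasis n j := rfl
      simp [stdBasis, hj]
  · simp [stdBasis, hi]

/-- double sum against two basis vectors -/
lemma sum_basis_basis (g : Fin n → Fin n → ZMod 2) (a b : Fin n) :
    ∑ i, ∑ j, g i j * (stdBasis n a i * stdBasis n b j) = g a b := by
  have h1 : ∀ i, ∑ j, g i j * (stdBasis n a i * stdBasis n b j)
      = if i = a then g i b else 0 := by
    intro i
    have : ∀ j, g i j * (stdBasis n a i * stdBasis n b j)
        = if j = b then (if i = a then g i j else 0) else 0 := by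
      intro j
      simp only [stdBasis]
      by_cases hj : j = b <;> by_cases hi : i = a <;> simp [hi, hj]
    rw [Finset.sum_congr rfl (fun j _ => this j), Finset.sum_ite_eq' Finset.univ b]
    simp
  rw [Finset.sum_congr rfl (fun i _ => h1 i), Finset.sum_ite_eq' Finset.univ a]
  simp

lemma qMap_td {a b : Fin n} (hab : a ≠ b) (v : QV n) (k : Fin n) :
    qMap f v k + qMap f (v + stdBasis n a) k + qMap f (v + stdBasis n b) k
      + qMap f (v + stdBasis n a + stdBasis n b) k = cCoef f k a b := by
  unfold qMap
  have step : ∀ i j : Fin n,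
      (if i < j then cCoef f k i j else 0) * (v i * v j)
      + (if i < j then cCoef f k i j else 0) * ((v + stdBasis n a) i * (v + stdBasis n a) j)
      + (if i < j then cCoef f k i j else 0) * ((v + stdBasis n b) i * (v + stdBasis n b) j)
      + (if i < j then cCoef f k i j else 0) * ((v + stdBasis n a + stdBasis n b) i * (v + stdBasis n a + stdBasis n b) j)
      = (if i < j then cCoef f k i j else 0) * (stdBasis n a i * stdBasis n b j)
        + (if i < j then cCoef f k i j else 0) * (stdBasis n b i * stdBasis n a j) := by
    intro i j
    simp only [Pi.add_apply]
    generalize (if i < j then cCoef f k i j else 0) = C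
    generalize v i = vi
    generalize v j = vj
    generalize stdBasis n a i = ai
    generalize stdBasis n a j = aj
    generalize stdBasis n b i = bi
    generalize stdBasis n b j = bj
    revert C vi vj ai aj bi bj
    decide
  have merge : qMap f v k + qMap f (v + stdBasis n a) k + qMap f (v + stdBasis n b) k
      + qMap f (v + stdBasis n a + stdBasis n b) k
      = ∑ i, ∑ j, ((if i < j then cCoef f k i j else 0) * (stdBasis n a i * stdBasis n b j)
        + (if i < j then cCoef f k i j else 0) * (stdBasis n b i * stdBasis n a j)) := by
    unfold qMap
    rw [← Finset.sum_add_distrib, ← Finset.sum_add_distrib, ← Finset.sum_add_distrib]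
    refine Finset.sum_congr rfl (fun i _ => ?_)
    rw [← Finset.sum_add_distrib, ← Finset.sum_add_distrib, ← Finset.sum_add_distrib]
    exact Finset.sum_congr rfl (fun j _ => step i j)
  unfold qMap at merge
  rw [merge]
  rw [Finset.sum_congr rfl (fun i (_ : i ∈ Finset.univ) => Finset.sum_add_distrib), Finset.sum_add_distrib]
  rw [sum_basis_basis (fun i j => if i < j then cCoef f k i j else 0) a b]
  rw [sum_basis_basis (fun i j => if i < j then cCoef f k i j else 0) b a]
  rcases lt_trichotomy a b with h | h | h
  · rw [if_pos h, if_neg (lt_asymm h), add_zero]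
  · exact absurd h hab
  · rw [if_neg (lt_asymm h), if_pos h, zero_add, cCoef_symm]
end Core

section Main
variable {n : ℕ} (f : QV n ≃ QV n)

lemma FT_pair {i j : Fin n} (hij : i < j) :
    FirstTwoIndices n (stdBasis n i + stdBasis n j) i j := by
  have hne : i ≠ j := Fin.ne_of_lt hij
  refine ⟨hij, ?_, ?_, ?_⟩
  · simp [Pi.add_apply, stdBasis, hne, Ne.symm hne]
  · simp [Pi.add_apply, stdBasis, hne, Ne.symm hne]
  · intro m hm hmi
    have hmj : m ≠ j := Fin.ne_of_lt hm
    simp [Pi.add_apply, stdBasis, hmi, hmj]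

lemma FT_unique {w : QV n} {i j i' j' : Fin n}
    (h : FirstTwoIndices n w i j) (h' : FirstTwoIndices n w i' j') : i = i' ∧ j = j' := by
  obtain ⟨hij, hwi, hwj, hmin⟩ := h
  obtain ⟨hij', hwi', hwj', hmin'⟩ := h'
  have hj : j = j' := by
    by_contra hne
    rcases lt_or_gt_of_ne hne with hlt | hgt
    · -- j < j' : i and j both < j', both = i'
      have hi1 : i = i' := by
        by_contra hi
        exact absurd hwi (by rw [hmin' i (lt_trans hij hlt) hi]; exact (by decide))
      have hi2 : j = i' := by
        by_contra hi
        exact absurd hwj (by rw [hmin' j hlt hi]; exact (by decide))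
      exact absurd (hi1.trans hi2.symm) (Fin.ne_of_lt hij)
    · have hi1 : i' = i := by
        by_contra hi
        exact absurd hwi' (by rw [hmin i' (lt_trans hij' hgt) hi]; exact (by decide))
      have hi2 : j' = i := by
        by_contra hi
        exact absurd hwj' (by rw [hmin j' hgt hi]; exact (by decide))
      exact absurd (hi1.trans hi2.symm) (Fin.ne_of_lt hij')
  refine ⟨?_, hj⟩
  by_contra hne
  have := hmin' i (hj ▸ hij) hne
  rw [this] at hwi
  exact absurd hwi (by decide)

lemma FT_of_two_le_card {v : QV n} (h : 2 ≤ (suppV v).card) :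
    ∃ i j : Fin n, FirstTwoIndices n v i j := by
  have hne : (suppV v).Nonempty := Finset.card_pos.mp (by omega)
  set i := (suppV v).min' hne with hi
  have hie : ((suppV v).erase i).Nonempty := by
    rw [← Finset.card_pos, Finset.card_erase_of_mem ((suppV v).min'_mem hne)]
    omega
  set j := ((suppV v).erase i).min' hie with hj
  have hjmem : j ∈ (suppV v).erase i := Finset.min'_mem _ hie
  refine ⟨i, j, ?_, ?_, ?_, ?_⟩
  · exact lt_of_le_of_ne ((suppV v).min'_le j (Finset.mem_of_mem_erase hjmem))
      (Ne.symm (Finset.ne_of_mem_erase hjmem))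
  · exact mem_suppV.mp ((suppV v).min'_mem hne)
  · exact mem_suppV.mp (Finset.mem_of_mem_erase hjmem)
  · intro m hm hmi
    rcases zmod2_cases (v m) with h0 | h1
    · exact h0
    · have : m ∈ (suppV v).erase i := Finset.mem_erase.mpr ⟨hmi, mem_suppV.mpr h1⟩
      exact absurd (Finset.min'_le _ m this) (not_le.mpr hm)

/-- vanishing of coefficients: `c k i j = 0` unless `i < j < k` or `j < i < k` -/
lemma cCoef_high
    (hsymmFT : ∀ (w : QV n) (i j : Fin n), FirstTwoIndices n w i j → FirstTwoIndices n (f.symm w) i j)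
    {i j k : Fin n} (hij : i < j) (hkj : k ≤ j) :
    cCoef f k i j = 0 := by
  have hFT := hsymmFT _ i j (FT_pair hij)
  obtain ⟨_, hvi, hvj, hmin⟩ := hFT
  have hne : i ≠ j := Fin.ne_of_lt hij
  unfold cCoef
  rcases eq_or_lt_of_le hkj with rfl | hlt
  · rw [hvj]
    simp [stdBasis, Ne.symm hne]
    decide
  · rcases eq_or_ne k i with rfl | hki
    · rw [hvi]
      simp [stdBasis, hne]
      decide
    · rw [hmin k hlt hki]
      simp [stdBasis, hki, Fin.ne_of_lt hlt]

lemma z2_main (F C vk Ak Bk x1 x2 x3 x4 : ZMod 2)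
    (h1 : (vk + Ak + Bk + x4) + (vk + Ak + x2) + (vk + Bk + x3) + F = C)
    (h2 : x1 + x2 + x3 + x4 = C) : F = vk + x1 := by
  revert F C vk Ak Bk x1 x2 x3 x4
  decide

lemma fsymm_formula
    (hsymm0 : f.symm 0 = 0)
    (hsymmstd : ∀ i, f.symm (stdBasis n i) = stdBasis n i)
    (hTD : ∀ (a b : Fin n) (x : QV n) (k : Fin n),
      f.symm (x + stdBasis n a + stdBasis n b) k + f.symm (x + stdBasis n a) k
        + f.symm (x + stdBasis n b) k + f.symm x k
      = f.symm (stdBasis n a + stdBasis n b) k + f.symm (stdBasis n a) k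
        + f.symm (stdBasis n b) k + f.symm 0 k) :
    ∀ v : QV n, f.symm v = fun k => v k + qMap f v k := by
  suffices H : ∀ (N : ℕ) (v : QV n), (suppV v).card ≤ N → f.symm v = fun k => v k + qMap f v k by
    intro v; exact H (suppV v).card v le_rfl
  intro N
  induction N with
  | zero =>
    intro v hv
    have h0 : v = 0 := suppV_eq_empty (Finset.card_eq_zero.mp (Nat.le_zero.mp hv))
    subst h0
    rw [hsymm0, qMap_zero]
    funext k; simp
  | succ N ih =>
    intro v hv
    rcases Nat.lt_or_ge (suppV v).card 2 with hsmall | hbig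
    · -- card 0 or 1
      interval_cases h : (suppV v).card
      · have h0 : v = 0 := suppV_eq_empty (Finset.card_eq_zero.mp h)
        subst h0
        rw [hsymm0, qMap_zero]; funext k; simp
      · obtain ⟨a, ha⟩ := Finset.card_eq_one.mp h
        have hva : v = stdBasis n a := suppV_single ha
        subst hva
        rw [hsymmstd, qMap_std]; funext k; simp
    · -- card ≥ 2
      obtain ⟨a, ha, b, hb, hab⟩ := Finset.one_lt_card.mp hbig
      have hcard1 : (suppV (v + stdBasis n a)).card = (suppV v).card - 1 := by
        rw [suppV_add_std ha, Finset.card_erase_of_mem ha]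
      have hcard2 : (suppV (v + stdBasis n b)).card = (suppV v).card - 1 := by
        rw [suppV_add_std hb, Finset.card_erase_of_mem hb]
      have hbmem : b ∈ suppV (v + stdBasis n a) := by
        rw [suppV_add_std ha]
        exact Finset.mem_erase.mpr ⟨hab.symm, hb⟩
      have hcard3 : (suppV (v + stdBasis n a + stdBasis n b)).card = (suppV v).card - 2 := by
        rw [suppV_add_std hbmem, Finset.card_erase_of_mem hbmem, hcard1]
        omega
      have hc2 : 2 ≤ (suppV v).card := hbig
      have ih1 := ih (v + stdBasis n a) (by omega)
      have ih2 := ih (v + stdBasis n b) (by omega)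
      have ih3 := ih (v + stdBasis n a + stdBasis n b) (by omega)
      funext k
      have htd := hTD a b v k
      have hdelta : f.symm (stdBasis n a + stdBasis n b) k + f.symm (stdBasis n a) k
          + f.symm (stdBasis n b) k + f.symm 0 k = cCoef f k a b := by
        rw [hsymmstd, hsymmstd, hsymm0, Pi.zero_apply, add_zero]
        rfl
      rw [hdelta] at htd
      simp only [ih1, ih2, ih3, Pi.add_apply] at htd
      have qtd := qMap_td f hab v k
      exact z2_main (f.symm v k) (cCoef f k a b) (v k) (stdBasis n a k) (stdBasis n b k)
        (qMap f v k) (qMap f (v + stdBasis n a) k) (qMap f (v + stdBasis n b) k)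
        (qMap f (v + stdBasis n a + stdBasis n b) k) htd qtd
end Main

section Bridge
variable {n : ℕ} (f : QV n ≃ QV n)

lemma FT_symm (h0 : f 0 = 0) (hstd : ∀ i, f (stdBasis n i) = stdBasis n i)
    (hFT : ∀ (v : QV n) (i j : Fin n), FirstTwoIndices n v i j → FirstTwoIndices n (f v) i j) :
    ∀ (w : QV n) (i j : Fin n), FirstTwoIndices n w i j → FirstTwoIndices n (f.symm w) i j := by
  intro w i j hw
  have hv2 : 2 ≤ (suppV (f.symm w)).card := by
    by_contra hlt
    push_neg at hlt
    interval_cases h : (suppV (f.symm w)).card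
    · have : f.symm w = 0 := suppV_eq_empty (Finset.card_eq_zero.mp h)
      have hw0 : w = 0 := by
        rw [← h0, ← this, Equiv.apply_symm_apply]
      rw [hw0] at hw
      exact absurd hw.2.1 (by rw [Pi.zero_apply]; decide)
    · obtain ⟨a, ha⟩ := Finset.card_eq_one.mp h
      have : f.symm w = stdBasis n a := suppV_single ha
      have hwa : w = stdBasis n a := by
        rw [← hstd, ← this, Equiv.apply_symm_apply]
      rw [hwa] at hw
      obtain ⟨hij, hwi, hwj, _⟩ := hw
      simp only [stdBasis] at hwi hwj
      have hia : i = a := by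
        by_contra hne; rw [if_neg hne] at hwi; exact absurd hwi (by decide)
      have hja : j = a := by
        by_contra hne; rw [if_neg hne] at hwj; exact absurd hwj (by decide)
      exact absurd (hia.trans hja.symm) (Fin.ne_of_lt hij)
  obtain ⟨i', j', hFT'⟩ := FT_of_two_le_card hv2
  have hup := hFT _ i' j' hFT'
  rw [Equiv.apply_symm_apply] at hup
  obtain ⟨hii, hjj⟩ := FT_unique hup hw
  rw [← hii, ← hjj]
  exact hFT'

lemma sum_std_mul (k : Fin n) (y : QV n) : (∑ i, stdBasis n k i * y i) = y k := by
  have : ∀ i, stdBasis n k i * y i = if i = k then y i else 0 := by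
    intro i
    simp only [stdBasis]
    by_cases h : i = k <;> simp [h]
  rw [Finset.sum_congr rfl (fun i _ => this i), Finset.sum_ite_eq' Finset.univ k]
  simp

lemma z2_bridge (ε sx sa : ZMod 2) : (ε + (sx + sa)) + (ε + sx) = (ε + sa) + (ε + 0) := by
  revert ε sx sa; decide
end Bridge

section Bridge2
variable {n : ℕ} (f : QV n ≃ QV n)

lemma third_diff
    (hsd : ∀ z w : QV n, ∃ (ε : ZMod 2) (t : QV n), ∀ x : QV n,
      (∑ i, z i * f.symm (x + w) i) + (∑ i, z i * f.symm x i) = ε + ∑ i, t i * x i) :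
    ∀ (a b : Fin n) (x : QV n) (k : Fin n),
      f.symm (x + stdBasis n a + stdBasis n b) k + f.symm (x + stdBasis n a) k
        + f.symm (x + stdBasis n b) k + f.symm x k
      = f.symm (stdBasis n a + stdBasis n b) k + f.symm (stdBasis n a) k
        + f.symm (stdBasis n b) k + f.symm 0 k := by
  intro a b x k
  obtain ⟨ε, t, hst⟩ := hsd (stdBasis n k) (stdBasis n b)
  have hst' : ∀ y : QV n, f.symm (y + stdBasis n b) k + f.symm y k = ε + ∑ i, t i * y i := by
    intro y
    have := hst y
    rwa [sum_std_mul, sum_std_mul] at this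
  have hSadd : (∑ i, t i * (x + stdBasis n a) i)
      = (∑ i, t i * x i) + (∑ i, t i * stdBasis n a i) := by
    rw [← Finset.sum_add_distrib]
    exact Finset.sum_congr rfl fun i _ => by rw [Pi.add_apply, mul_add]
  have hS0 : (∑ i, t i * (0:QV n) i) = 0 := by simp
  have e1 := hst' (x + stdBasis n a)
  have e2 := hst' x
  have e3 := hst' (stdBasis n a)
  have e4 := hst' 0
  rw [zero_add] at e4
  rw [add_assoc (f.symm (x + stdBasis n a + stdBasis n b) k + f.symm (x + stdBasis n a) k)
        (f.symm (x + stdBasis n b) k) (f.symm x k),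
      add_assoc (f.symm (stdBasis n a + stdBasis n b) k + f.symm (stdBasis n a) k)
        (f.symm (stdBasis n b) k) (f.symm 0 k)]
  rw [e1, e2, e3, e4, hSadd, hS0]
  exact z2_bridge ε (∑ i, t i * x i) (∑ i, t i * stdBasis n a i)
end Bridge2

section ListConstr
variable {n : ℕ}

def cList (c : Fin n → Fin n → Fin n → ZMod 2) : List (Fin n × Fin n × Fin n) :=
  (List.finRange n).flatMap (fun k =>
    (List.finRange n).flatMap (fun i =>
      (List.finRange n).flatMap (fun j =>
        if i < j ∧ j < k ∧ c k i j = 1 then [(i, j, k)] else [])))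

lemma mem_cList (c : Fin n → Fin n → Fin n → ZMod 2) (t : Fin n × Fin n × Fin n) :
    t ∈ cList c ↔ (t.1 < t.2.1 ∧ t.2.1 < t.2.2 ∧ c t.2.2 t.1 t.2.1 = 1) := by
  simp only [cList, List.mem_flatMap, List.mem_finRange, true_and, mem_if_singleton]
  constructor
  · rintro ⟨k, i, j, hcond, rfl⟩
    exact hcond
  · intro h
    exact ⟨t.2.2, t.1, t.2.1, h, rfl⟩

lemma cList_nodup (c : Fin n → Fin n → Fin n → ZMod 2) : (cList c).Nodup := by
  refine nodup_flatMap_key _ _ (fun t => t.2.2) (List.nodup_finRange n) (fun k => ?_) ?_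
  · refine nodup_flatMap_key _ _ (fun t => t.1) (List.nodup_finRange n) (fun i => ?_) ?_
    · refine nodup_flatMap_key _ _ (fun t => t.2.1) (List.nodup_finRange n) (fun j => ?_) ?_
      · split <;> simp
      · intro j _ b hb
        obtain ⟨_, rfl⟩ := mem_if_singleton.mp hb
        rfl
    · intro i _ b hb
      obtain ⟨j, _, hb⟩ := List.mem_flatMap.mp hb
      obtain ⟨_, rfl⟩ := mem_if_singleton.mp hb
      rfl
  · intro k _ b hb
    obtain ⟨i, _, hb'⟩ := List.mem_flatMap.mp hb
    obtain ⟨j, _, hb''⟩ := List.mem_flatMap.mp hb'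
    obtain ⟨_, rfl⟩ := mem_if_singleton.mp hb''
    rfl

lemma cList_pairwise (c : Fin n → Fin n → Fin n → ZMod 2) :
    (cList c).Pairwise (fun s t => s.2.2 ≤ t.2.2) := by
  unfold cList
  refine pairwise_flatMap_key _ _ (fun t : Fin n × Fin n × Fin n => t.2.2)
    (· ≤ ·) (fun a => le_refl a) ((List.pairwise_lt_finRange n).imp le_of_lt) ?_
  intro k _ b hb
  obtain ⟨i, _, hb'⟩ := List.mem_flatMap.mp hb
  obtain ⟨j, _, hb''⟩ := List.mem_flatMap.mp hb'
  obtain ⟨_, rfl⟩ := mem_if_singleton.mp hb''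
  rfl

lemma cList_sum (c : Fin n → Fin n → Fin n → ZMod 2)
    (hc : ∀ i j k : Fin n, i < j → ¬ j < k → c k i j = 0) (w : QV n) (m : Fin n) :
    ((cList c).map (fun t => if t.2.2 = m then w t.1 * w t.2.1 else 0)).sum
      = ∑ i, ∑ j, (if i < j then c m i j else 0) * (w i * w j) := by
  set g : (Fin n × Fin n × Fin n) → ZMod 2 :=
    fun t => if t.2.2 = m then w t.1 * w t.2.1 else 0 with hg
  have inner3 : ∀ k i j : Fin n,
      (((if i < j ∧ j < k ∧ c k i j = 1 then [(i, j, k)] else []).map g).sum)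
      = if i < j ∧ j < k ∧ c k i j = 1 then g (i, j, k) else 0 := by
    intro k i j; split <;> simp
  have step1 : ((cList c).map g).sum
      = ((List.finRange n).map (fun k => ((List.finRange n).map (fun i =>
          ((List.finRange n).map (fun j =>
            if i < j ∧ j < k ∧ c k i j = 1 then g (i, j, k) else 0)).sum)).sum)).sum := by
    unfold cList
    rw [sum_map_flatMap]
    refine congrArg List.sum (List.map_congr_left fun k _ => ?_)
    rw [sum_map_flatMap]
    refine congrArg List.sum (List.map_congr_left fun i _ => ?_)
    rw [sum_map_flatMap]
    exact congrArg List.sum (List.map_congr_left fun j _ => inner3 k i j)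
  rw [step1]
  have step2 : ((List.finRange n).map (fun k => ((List.finRange n).map (fun i =>
          ((List.finRange n).map (fun j =>
            if i < j ∧ j < k ∧ c k i j = 1 then g (i, j, k) else 0)).sum)).sum)).sum
      = ∑ k, ∑ i, ∑ j, (if i < j ∧ j < k ∧ c k i j = 1 then g (i, j, k) else 0) := by
    rw [Fin.sum_univ_def]
    refine congrArg List.sum (List.map_congr_left fun k _ => ?_)
    rw [Fin.sum_univ_def]
    refine congrArg List.sum (List.map_congr_left fun i _ => ?_)
    rw [Fin.sum_univ_def]
  rw [step2]
  have step3 : ∀ k : Fin n, (∑ i, ∑ j, (if i < j ∧ j < k ∧ c k i j = 1 then g (i, j, k) else 0))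
      = if k = m then ∑ i, ∑ j, (if i < j ∧ j < m ∧ c m i j = 1 then w i * w j else 0) else 0 := by
    intro k
    rcases eq_or_ne k m with rfl | hk
    · rw [if_pos rfl]
      refine Finset.sum_congr rfl fun i _ => Finset.sum_congr rfl fun j _ => ?_
      simp [hg]
    · rw [if_neg hk]
      refine Finset.sum_eq_zero fun i _ => Finset.sum_eq_zero fun j _ => ?_
      simp [hg, hk]
  rw [Finset.sum_congr rfl (fun k _ => step3 k), Finset.sum_ite_eq' Finset.univ m, if_pos (Finset.mem_univ m)]
  refine Finset.sum_congr rfl fun i _ => Finset.sum_congr rfl fun j _ => ?_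
  by_cases hij : i < j
  · by_cases hjm : j < m
    · rcases eq_or_ne (c m i j) 1 with hc1 | hc1
      · rw [if_pos ⟨hij, hjm, hc1⟩, if_pos hij, hc1, one_mul]
      · have hc0 : c m i j = 0 := by
          rcases zmod2_cases (c m i j) with h | h
          · exact h
          · exact absurd h hc1
        rw [if_neg (fun hcond => hc1 hcond.2.2), if_pos hij, hc0, zero_mul]
    · rw [if_neg (fun hcond => hjm hcond.2.1), if_pos hij, hc i j m hij hjm, zero_mul]
  · rw [if_neg (fun hcond => hij hcond.1), if_neg hij, zero_mul]
end ListConstr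

/-- A permutation gate `π ∈ 𝒞₃` is in staircase form iff `π(0)=0`,
`π(eᵢ)=eᵢ` for all `i`, and for every vector with at least two nonzero coordinates the
indices of the first two nonzero coordinates of `v` and of `π(v)` coincide. -/

theorem stmt16 (n : ℕ) (hn : 1 ≤ n) (f : QV n ≃ QV n)
    (hf : permGate n f ∈ CliffordLevel n 3) :
    IsStaircase n ⇑f ↔
      (f 0 = 0 ∧
       (∀ i : Fin n, f (stdBasis n i) = stdBasis n i) ∧
       (∀ (v : QV n) (i j : Fin n),
          FirstTwoIndices n v i j → FirstTwoIndices n (f v) i j)) := by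
  constructor
  · rintro ⟨L, hnodup, hall, hchain, hfun⟩
    have hfold : ∀ v : QV n, f v = L.foldl (tofStep n) v := fun v => by rw [hfun]
    refine ⟨?_, ?_, ?_⟩
    · rw [hfold 0]
      exact foldl_preserve (fun w => w = 0)
        (fun t w h1 h2 hw => by rw [hw]; exact tof_zero n t.1 t.2.1 t.2.2) L hall 0 rfl
    · intro i
      rw [hfold]
      exact foldl_preserve (fun w => w = stdBasis n i)
        (fun t w h1 h2 hw => by rw [hw]; exact tof_std n t.1 t.2.1 t.2.2 h1 i) L hall _ rfl
    · intro v i j hv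
      rw [hfold]
      exact foldl_preserve (fun w => FirstTwoIndices n w i j)
        (fun t w h1 h2 hw => tof_firstTwo n t.1 t.2.1 t.2.2 h1 h2 w i j hw) L hall v hv
  · rintro ⟨h0, hstd, hFT⟩
    have hsymm0 : f.symm 0 = 0 := by
      rw [Equiv.symm_apply_eq]; exact h0.symm
    have hsymmstd : ∀ i, f.symm (stdBasis n i) = stdBasis n i := by
      intro i; rw [Equiv.symm_apply_eq]; exact (hstd i).symm
    have hsymmFT := FT_symm f h0 hstd hFT
    have hTD := third_diff f (fun z w => second_diff_exists f hf z w)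
    have hform := fsymm_formula f hsymm0 hsymmstd hTD
    have hc : ∀ i j k : Fin n, i < j → ¬ j < k → cCoef f k i j = 0 :=
      fun i j k hij hjk => cCoef_high f hsymmFT hij (not_lt.mp hjk)
    have hLfacts : ∀ t ∈ cList (cCoef f), t.1 < t.2.1 ∧ t.2.1 < t.2.2 :=
      fun t ht => ⟨((mem_cList _ t).mp ht).1, ((mem_cList _ t).mp ht).2.1⟩
    refine ⟨cList (cCoef f), cList_nodup _, hLfacts, (cList_pairwise _).isChain, ?_⟩
    funext v
    have hfold := foldl_coord (cList (cCoef f)) hLfacts (cList_pairwise _) v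
    set w := (cList (cCoef f)).foldl (tofStep n) v with hw
    have hsw : f.symm w = v := by
      funext m
      have h1 : f.symm w m = w m + qMap f w m := by rw [hform w]
      have h2 := hfold m
      have h3 := cList_sum (cCoef f) hc w m
      have h4 : qMap f w m
          = (((cList (cCoef f)).map (fun t => if t.2.2 = m then w t.1 * w t.2.1 else 0)).sum) := by
        rw [h3]; rfl
      rw [h1, h4, h2, add_assoc, zmod2_add_self, add_zero]
    exact ((Equiv.symm_apply_eq f).mp hsw).symm
end
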